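/- Let R be a commutative ring with unity and x ∈ R with (x) = (x)². Then the quotient map R → R/Ann(x), restricted to the set J_x, is injective and its image is exactly the set of units of R/Ann(x). Consequently (since the quotient map preserves multiplication) J_x is a group under multiplication, isomorphic to the unit group of R/Ann(x). -/

import Mathlib

/-- The annihilator `Ann(x) = {y ∈ R | x * y = 0}` of an element `x` of a
commutative ring `R`, as an ideal of `R`. -/
def ann {R : Type*} [CommRing R] (x : R) : Ideal R where
  carrier := {y : R | x * y = 0}
  add_mem' := by
    intro a b ha hb
    simp only [Set.mem_setOf_eq] at *
    rw [mul_add, ha, hb, add_zero]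
  zero_mem' := by simp
  smul_mem' := by
    intro c y hy
    simp only [smul_eq_mul, Set.mem_setOf_eq] at *
    rw [mul_comm c y, ← mul_assoc, hy, zero_mul]

/-- `J_x = {xu : u ∈ R, [u] a unit of R/Ann(x)}`. -/
def Jset {R : Type*} [CommRing R] (x : R) : Set R :=
  {z : R | ∃ u : R, z = x * u ∧ IsUnit (Ideal.Quotient.mk (ann x) u)}

/-- If `(x) = (x)²` then the quotient map `R → R/Ann(x)` is injective on `J_x`
and maps `J_x` onto the group of units of `R/Ann(x)`; since this map is
multiplicative, `J_x` is a group isomorphic to the unit group of `R/Ann(x)`. -/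
theorem Jset_group_of_span_idempotent {R : Type*} [CommRing R] (x : R)
    (h : Ideal.span {x} = Ideal.span {x} ^ 2) :
    Set.InjOn (Ideal.Quotient.mk (ann x)) (Jset x) ∧
      (Ideal.Quotient.mk (ann x)) '' (Jset x) = {z : R ⧸ ann x | IsUnit z} := by
  obtain ⟨t, ht⟩ : x ^ 2 ∣ x := by
    rw [← Ideal.mem_span_singleton, ← Ideal.span_singleton_pow, ← h]
    exact Ideal.mem_span_singleton_self x
  have hmem : ∀ y : R, y ∈ ann x ↔ x * y = 0 := fun y => Iff.rfl
  have hxt : (Ideal.Quotient.mk (ann x)) x * (Ideal.Quotient.mk (ann x)) t = 1 := by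
    rw [← map_mul, ← map_one (Ideal.Quotient.mk (ann x)), Ideal.Quotient.eq]
    rw [hmem]
    linear_combination -ht
  have hux : IsUnit ((Ideal.Quotient.mk (ann x)) x) := IsUnit.of_mul_eq_one _ hxt
  have hut : IsUnit ((Ideal.Quotient.mk (ann x)) t) :=
    IsUnit.of_mul_eq_one _ (by rw [mul_comm]; exact hxt)
  constructor
  · rintro a ⟨u, rfl, hu⟩ b ⟨v, rfl, hv⟩ hab
    have h0 : x * (x * u - x * v) = 0 := by
      rw [← hmem]; exact Ideal.Quotient.eq.mp hab
    have : x * u - x * v = t * (x * (x * u - x * v)) := by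
      linear_combination (u - v) * ht
    rw [h0, mul_zero] at this
    exact sub_eq_zero.mp this
  · ext z
    constructor
    · rintro ⟨a, ⟨u, rfl, hu⟩, rfl⟩
      rw [map_mul]
      exact hux.mul hu
    · rintro hz
      obtain ⟨w, rfl⟩ := Ideal.Quotient.mk_surjective z
      refine ⟨x * (w * t), ⟨w * t, rfl, ?_⟩, ?_⟩
      · rw [map_mul]; exact hz.mul hut
      · rw [map_mul, map_mul, mul_comm ((Ideal.Quotient.mk (ann x)) w), ← mul_assoc, hxt, one_mul]
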